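/- Let X be an ω-category whose n-truncation is a free extension A[I]. The generalized whiskering (replacement) operations on n-cells satisfy: (commutativity) for distinct occurrence indices r ≠ q in ⟦u⟧, (u ▫_r v) ▫_q w = (u ▫_q w) ▫_r v whenever both sides are defined with v, w n-cells; (associativity) if u ▫_r v is defined with v an n-cell, q ∈ ⟦v⟧, and v ▫_q w is defined with w of dimension ≥ n, then (u ▫_r v) ▫_q w = u ▫_r (v ▫_q w); (identity) if ⟨u⟩(r) = x then u ▫_r x = u. -/

import Mathlib

/-- A globular higher-categorical cell structure: cells of all dimensions,
with domain (`src`), codomain (`tgt`), identity (`ide`) and, for each `k`,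
binary composition at level `k` (a total operation; the laws below are
conditioned on the definedness conditions). For `u` of dimension `0`, we set
`src u = tgt u = u`. -/
structure OmegaCat : Type 1 where
  cell : Type
  dim : cell → ℕ
  src : cell → cell
  tgt : cell → cell
  ide : cell → cell
  comp : ℕ → cell → cell → cell

namespace OmegaCat

/-- The iterated domain `d^{(k)} u` of a cell `u` of dimension `≥ k`. -/
def srcAt (X : OmegaCat) (k : ℕ) (u : X.cell) : X.cell := X.src^[X.dim u - k] u

/-- The iterated codomain `c^{(k)} u` of a cell `u` of dimension `≥ k`. -/
def tgtAt (X : OmegaCat) (k : ℕ) (u : X.cell) : X.cell := X.tgt^[X.dim u - k] u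

/-- The iterated identity `1^{(m)}_u` over a cell `u` of dimension `≤ m`. -/
def idePad (X : OmegaCat) (m : ℕ) (u : X.cell) : X.cell := X.ide^[m - X.dim u] u

/-- Composability of two cells at level `k`: equal dimensions `> k` and
matching iterated domain/codomain at level `k`. -/
def Composable (X : OmegaCat) (k : ℕ) (u v : X.cell) : Prop :=
  X.dim u = X.dim v ∧ k < X.dim u ∧ X.srcAt k u = X.tgtAt k v

/-- Whiskering composition of cells of possibly different dimensions: the
lower-dimensional argument is padded with iterated identities. -/
def wcomp (X : OmegaCat) (k : ℕ) (u v : X.cell) : X.cell :=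
  X.comp k (X.idePad (max (X.dim u) (X.dim v)) u)
           (X.idePad (max (X.dim u) (X.dim v)) v)

/-- Parallelism of two cells (any two 0-cells are parallel). -/
def Par (X : OmegaCat) (a b : X.cell) : Prop :=
  X.dim a = X.dim b ∧ (X.dim a = 0 ∨ (X.src a = X.src b ∧ X.tgt a = X.tgt b))

end OmegaCat

/-- The laws of a strict ω-category: globularity, behaviour of dimensions,
domains and codomains under the operations, associativity, exchange and
identity laws for the compositions. -/
structure OmegaCat.Laws (X : OmegaCat) : Prop where
  src_dim0 : ∀ u, X.dim u = 0 → X.src u = u ∧ X.tgt u = u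
  dim_src : ∀ u, 0 < X.dim u → X.dim (X.src u) = X.dim u - 1
  dim_tgt : ∀ u, 0 < X.dim u → X.dim (X.tgt u) = X.dim u - 1
  src_src : ∀ u, 1 < X.dim u → X.src (X.src u) = X.src (X.tgt u)
  tgt_src : ∀ u, 1 < X.dim u → X.tgt (X.src u) = X.tgt (X.tgt u)
  dim_ide : ∀ u, X.dim (X.ide u) = X.dim u + 1
  src_ide : ∀ u, X.src (X.ide u) = u
  tgt_ide : ∀ u, X.tgt (X.ide u) = u
  dim_comp : ∀ k u v, X.Composable k u v → X.dim (X.comp k u v) = X.dim u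
  bd_comp_top : ∀ k u v, X.Composable k u v → k + 1 = X.dim u →
    X.src (X.comp k u v) = X.src v ∧ X.tgt (X.comp k u v) = X.tgt u
  bd_comp : ∀ k u v, X.Composable k u v → k + 1 < X.dim u →
    X.src (X.comp k u v) = X.comp k (X.src u) (X.src v) ∧
    X.tgt (X.comp k u v) = X.comp k (X.tgt u) (X.tgt v)
  comp_assoc : ∀ k u v w, X.Composable k u v → X.Composable k v w →
    X.comp k (X.comp k u v) w = X.comp k u (X.comp k v w)
  exch : ∀ l k t t₁ s s₁, l < k →
    X.Composable k t t₁ → X.Composable k s s₁ →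
    X.Composable l (X.comp k t t₁) (X.comp k s s₁) →
    X.comp l (X.comp k t t₁) (X.comp k s s₁) =
      X.comp k (X.comp l t s) (X.comp l t₁ s₁)
  comp_id_left : ∀ k u, k < X.dim u →
    X.comp k (X.idePad (X.dim u) (X.tgtAt k u)) u = u
  comp_id_right : ∀ k u, k < X.dim u →
    X.comp k u (X.idePad (X.dim u) (X.srcAt k u)) = u
  ide_comp : ∀ k u v, X.Composable k u v →
    X.ide (X.comp k u v) = X.comp k (X.ide u) (X.ide v)

/-- `F` is (the function underlying) an ω-functor from `X` to `Z`. -/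
def IsOmegaFn (X Z : OmegaCat) (F : X.cell → Z.cell) : Prop :=
  (∀ u, Z.dim (F u) = X.dim u) ∧
  (∀ u, 0 < X.dim u → Z.src (F u) = F (X.src u) ∧ Z.tgt (F u) = F (X.tgt u)) ∧
  (∀ u, F (X.ide u) = Z.ide (F u)) ∧
  (∀ k u v, X.Composable k u v →
    Z.Composable k (F u) (F v) ∧ F (X.comp k u v) = Z.comp k (F u) (F v))

/-- `X` is an `n`-category: every cell of dimension `> n` is an identity. -/
def IsNCat (X : OmegaCat) (n : ℕ) : Prop :=
  ∀ u, n < X.dim u → ∃ v, u = X.ide v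

/-- `Z` extends `X` at level `m` via `e`, i.e. `e` identifies the `m`-th
truncation of `X` with that of `Z`. -/
def ExtendsAt (Z X : OmegaCat) (m : ℕ) (e : X.cell → Z.cell) : Prop :=
  (∀ a b, X.dim a ≤ m → X.dim b ≤ m → e a = e b → a = b) ∧
  (∀ u, Z.dim u ≤ m → ∃ a, X.dim a ≤ m ∧ e a = u) ∧
  (∀ a, X.dim a ≤ m → Z.dim (e a) = X.dim a) ∧
  (∀ a, 0 < X.dim a → X.dim a ≤ m →
    Z.src (e a) = e (X.src a) ∧ Z.tgt (e a) = e (X.tgt a)) ∧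
  (∀ a, X.dim a < m → Z.ide (e a) = e (X.ide a)) ∧
  (∀ k a b, X.Composable k a b → X.dim a ≤ m →
    Z.comp k (e a) (e b) = e (X.comp k a b))

/-- The `n`-th truncation of `X` is the free extension of its `(n−1)`-th
truncation generated by the set `I` of `n`-indeterminates: every assignment of
`I` into an ω-category `Z` extending the `(n−1)`-truncation of `X`, respecting
domains and codomains, extends uniquely to the `n`-truncation of `X`. -/
def FreeAtLevel (X : OmegaCat) (n : ℕ) (I : Set X.cell) : Prop :=
  (∀ x ∈ I, X.dim x = n) ∧
  ∀ (Z : OmegaCat), Z.Laws → ∀ (e : X.cell → Z.cell), ExtendsAt Z X (n-1) e →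
    ∀ (φ : X.cell → Z.cell),
      (∀ x ∈ I, Z.dim (φ x) = n ∧ Z.src (φ x) = e (X.src x) ∧
        Z.tgt (φ x) = e (X.tgt x)) →
      ∃ G : X.cell → Z.cell,
        ((∀ u, X.dim u ≤ n - 1 → G u = e u) ∧ (∀ x ∈ I, G x = φ x) ∧
         (∀ u, X.dim u ≤ n → Z.dim (G u) = X.dim u) ∧
         (∀ u, 0 < X.dim u → X.dim u ≤ n →
           Z.src (G u) = G (X.src u) ∧ Z.tgt (G u) = G (X.tgt u)) ∧
         (∀ k u v, X.Composable k u v → X.dim u ≤ n →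
           G (X.comp k u v) = Z.comp k (G u) (G v)) ∧
         (∀ u, X.dim u < n → G (X.ide u) = Z.ide (G u))) ∧
        ∀ G' : X.cell → Z.cell,
          ((∀ u, X.dim u ≤ n - 1 → G' u = e u) ∧ (∀ x ∈ I, G' x = φ x) ∧
           (∀ u, X.dim u ≤ n → Z.dim (G' u) = X.dim u) ∧
           (∀ u, 0 < X.dim u → X.dim u ≤ n →
             Z.src (G' u) = G' (X.src u) ∧ Z.tgt (G' u) = G' (X.tgt u)) ∧
           (∀ k u v, X.Composable k u v → X.dim u ≤ n →
             G' (X.comp k u v) = Z.comp k (G' u) (G' v)) ∧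
           (∀ u, X.dim u < n → G' (X.ide u) = Z.ide (G' u))) →
          ∀ u, X.dim u ≤ n → G' u = G u
/-- Occurrence data for the `n`-cells of `X` (whose `n`-truncation is freely
generated by the `n`-indeterminates `I`): each `n`-cell `u` has a finite
indexed set of occurrences of indeterminates, with
`⟦u •_k v⟧ = ⟦u⟧ ⊔ ⟦v⟧`, one occurrence in each indeterminate and none in
identity cells. -/
structure CellOcc (X : OmegaCat) (n : ℕ) (I : Set X.cell) where
  oI : X.cell → Finset ℕ
  oF : X.cell → ℕ → X.cell
  occ_mem : ∀ u r, r ∈ oI u → oF u r ∈ I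
  occ_ind : ∀ x ∈ I, ∃ r, oI x = {r} ∧ oF x r = x
  occ_ide : ∀ u, X.dim u = n - 1 → oI (X.ide u) = ∅
  occ_comp : ∀ k u v, k < n → X.dim u = n → X.Composable k u v →
    Disjoint (oI u) (oI v) ∧ oI (X.comp k u v) = oI u ∪ oI v ∧
    (∀ i ∈ oI u, oF (X.comp k u v) i = oF u i) ∧
    (∀ i ∈ oI v, oF (X.comp k u v) i = oF v i)

/-- Definedness of the generalized whiskering `u ▫_r v`: `u` is an `n`-cell,
`r` indexes an occurrence of the indeterminate `x = ⟨u⟩(r)` in `u`, and `v` is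
a cell of dimension `≥ n` with `d^{(n−1)} v = d x` and `c^{(n−1)} v = c x`. -/
def WDef (X : OmegaCat) (n : ℕ) {I : Set X.cell} (D : CellOcc X n I)
    (u : X.cell) (r : ℕ) (v : X.cell) : Prop :=
  X.dim u = n ∧ r ∈ D.oI u ∧ n ≤ X.dim v ∧
  X.srcAt (n-1) v = X.src (D.oF u r) ∧ X.tgtAt (n-1) v = X.tgt (D.oF u r)

/-- The characterizing conditions for the system of generalized whiskering
(replacement) operations `▫` on the `n`-cells of `X`. -/
def IsWhisk (X : OmegaCat) (n : ℕ) {I : Set X.cell} (D : CellOcc X n I)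
    (rep : X.cell → ℕ → X.cell → X.cell) : Prop :=
  (∀ u r v, WDef X n D u r v →
      X.dim (rep u r v) = X.dim v ∧
      X.srcAt (n-1) (rep u r v) = X.src u ∧
      X.tgtAt (n-1) (rep u r v) = X.tgt u) ∧
  (∀ x r v, x ∈ I → D.oI x = {r} → WDef X n D x r v → rep x r v = v) ∧
  (∀ k u u' r v, k < n → X.dim u = n → X.Composable k u u' →
     WDef X n D (X.comp k u u') r v →
     (r ∈ D.oI u → rep (X.comp k u u') r v = X.wcomp k (rep u r v) u') ∧
     (r ∈ D.oI u' → rep (X.comp k u u') r v = X.wcomp k u (rep u' r v)))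

/-- Placed composition: `u ∘_r v = u •_n (du ▫_r v)`. -/
def pcomp (X : OmegaCat) (n : ℕ) (rep : X.cell → ℕ → X.cell → X.cell)
    (u : X.cell) (r : ℕ) (v : X.cell) : X.cell :=
  X.comp n u (rep (X.src u) r v)

/-- Definedness of the placed composition of `(n+1)`-cells `u ∘_r v`:
`r` indexes an occurrence of an indeterminate `x` in `du` and `cv = x`. -/
def PDef (X : OmegaCat) (n : ℕ) {I : Set X.cell} (D : CellOcc X n I)
    (u : X.cell) (r : ℕ) (v : X.cell) : Prop :=
  X.dim u = n + 1 ∧ X.dim v = n + 1 ∧ r ∈ D.oI (X.src u) ∧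
    X.tgt v = D.oF (X.src u) r
section BoundaryLemmas

variable {X : OmegaCat}

lemma dim_iter_src (hX : X.Laws) : ∀ (j : ℕ) (u : X.cell), j ≤ X.dim u →
    X.dim (X.src^[j] u) = X.dim u - j := by
  intro j
  induction j with
  | zero => intro u _; simp
  | succ j ih =>
    intro u hj
    have h1 : j ≤ X.dim u := Nat.le_of_succ_le hj
    have h2 := ih u h1
    rw [Function.iterate_succ_apply', hX.dim_src, h2, Nat.sub_sub]
    rw [h2]; omega

lemma dim_iter_tgt (hX : X.Laws) : ∀ (j : ℕ) (u : X.cell), j ≤ X.dim u →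
    X.dim (X.tgt^[j] u) = X.dim u - j := by
  intro j
  induction j with
  | zero => intro u _; simp
  | succ j ih =>
    intro u hj
    have h1 : j ≤ X.dim u := Nat.le_of_succ_le hj
    have h2 := ih u h1
    rw [Function.iterate_succ_apply', hX.dim_tgt, h2, Nat.sub_sub]
    rw [h2]; omega

lemma dim_srcAt (hX : X.Laws) (k : ℕ) (u : X.cell) (h : k ≤ X.dim u) :
    X.dim (X.srcAt k u) = k := by
  rw [OmegaCat.srcAt, dim_iter_src hX _ _ (Nat.sub_le _ _)]; omega

lemma dim_tgtAt (hX : X.Laws) (k : ℕ) (u : X.cell) (h : k ≤ X.dim u) :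
    X.dim (X.tgtAt k u) = k := by
  rw [OmegaCat.tgtAt, dim_iter_tgt hX _ _ (Nat.sub_le _ _)]; omega

lemma srcAt_src (hX : X.Laws) (k : ℕ) (u : X.cell) (h : k < X.dim u) :
    X.srcAt k (X.src u) = X.srcAt k u := by
  have h0 : 0 < X.dim u := Nat.lt_of_le_of_lt (Nat.zero_le _) h
  rw [OmegaCat.srcAt, OmegaCat.srcAt, hX.dim_src u h0]
  have : X.dim u - k = (X.dim u - 1 - k) + 1 := by omega
  rw [this, Function.iterate_succ_apply]

lemma tgtAt_tgt (hX : X.Laws) (k : ℕ) (u : X.cell) (h : k < X.dim u) :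
    X.tgtAt k (X.tgt u) = X.tgtAt k u := by
  have h0 : 0 < X.dim u := Nat.lt_of_le_of_lt (Nat.zero_le _) h
  rw [OmegaCat.tgtAt, OmegaCat.tgtAt, hX.dim_tgt u h0]
  have : X.dim u - k = (X.dim u - 1 - k) + 1 := by omega
  rw [this, Function.iterate_succ_apply]

lemma srcAt_tgt (hX : X.Laws) (k : ℕ) (u : X.cell) (h : k + 1 < X.dim u) :
    X.srcAt k (X.tgt u) = X.srcAt k u := by
  have h0 : 0 < X.dim u := by omega
  rw [OmegaCat.srcAt, OmegaCat.srcAt, hX.dim_tgt u h0]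
  have e1 : X.dim u - 1 - k = (X.dim u - 2 - k) + 1 := by omega
  have e2 : X.dim u - k = (X.dim u - 2 - k) + 1 + 1 := by omega
  rw [e1, e2, Function.iterate_succ_apply, Function.iterate_succ_apply,
    Function.iterate_succ_apply, ← hX.src_src u (by omega)]

lemma tgtAt_src (hX : X.Laws) (k : ℕ) (u : X.cell) (h : k + 1 < X.dim u) :
    X.tgtAt k (X.src u) = X.tgtAt k u := by
  have h0 : 0 < X.dim u := by omega
  rw [OmegaCat.tgtAt, OmegaCat.tgtAt, hX.dim_src u h0]
  have e1 : X.dim u - 1 - k = (X.dim u - 2 - k) + 1 := by omega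
  have e2 : X.dim u - k = (X.dim u - 2 - k) + 1 + 1 := by omega
  rw [e1, e2, Function.iterate_succ_apply, Function.iterate_succ_apply,
    Function.iterate_succ_apply, hX.tgt_src u (by omega)]

lemma srcAt_srcAt (hX : X.Laws) (l k : ℕ) (u : X.cell) (hlk : l ≤ k)
    (hk : k ≤ X.dim u) : X.srcAt l (X.srcAt k u) = X.srcAt l u := by
  have hd := dim_srcAt hX k u hk
  conv_lhs => rw [OmegaCat.srcAt, hd]
  rw [OmegaCat.srcAt, OmegaCat.srcAt, ← Function.iterate_add_apply]
  congr 1; omega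

lemma tgtAt_tgtAt (hX : X.Laws) (l k : ℕ) (u : X.cell) (hlk : l ≤ k)
    (hk : k ≤ X.dim u) : X.tgtAt l (X.tgtAt k u) = X.tgtAt l u := by
  have hd := dim_tgtAt hX k u hk
  conv_lhs => rw [OmegaCat.tgtAt, hd]
  rw [OmegaCat.tgtAt, OmegaCat.tgtAt, ← Function.iterate_add_apply]
  congr 1; omega

lemma srcAt_dim_eq (u : X.cell) (h : X.dim u = k) : X.srcAt k u = u := by
  rw [OmegaCat.srcAt, h, Nat.sub_self]; rfl

lemma tgtAt_dim_eq (u : X.cell) (h : X.dim u = k) : X.tgtAt k u = u := by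
  rw [OmegaCat.tgtAt, h, Nat.sub_self]; rfl

lemma srcAt_tgtAt (hX : X.Laws) (l k : ℕ) (u : X.cell) (hlk : l < k)
    (hk : k ≤ X.dim u) : X.srcAt l (X.tgtAt k u) = X.srcAt l u := by
  obtain ⟨j, hj⟩ : ∃ j, X.dim u = k + j := ⟨X.dim u - k, by omega⟩
  induction j generalizing u with
  | zero => rw [tgtAt_dim_eq u (by omega)]
  | succ j ih =>
    have hd : 0 < X.dim u := by omega
    have h2 : X.dim (X.tgt u) = k + j := by rw [hX.dim_tgt u hd]; omega
    rw [← tgtAt_tgt hX k u (by omega), ih (X.tgt u) (by omega) h2,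
      srcAt_tgt hX l u (by omega)]

lemma tgtAt_srcAt (hX : X.Laws) (l k : ℕ) (u : X.cell) (hlk : l < k)
    (hk : k ≤ X.dim u) : X.tgtAt l (X.srcAt k u) = X.tgtAt l u := by
  obtain ⟨j, hj⟩ : ∃ j, X.dim u = k + j := ⟨X.dim u - k, by omega⟩
  induction j generalizing u with
  | zero => rw [srcAt_dim_eq u (by omega)]
  | succ j ih =>
    have hd : 0 < X.dim u := by omega
    have h2 : X.dim (X.src u) = k + j := by rw [hX.dim_src u hd]; omega
    rw [← srcAt_src hX k u (by omega), ih (X.src u) (by omega) h2,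
      tgtAt_src hX l u (by omega)]

end BoundaryLemmas
section CompLemmas

variable {X : OmegaCat}

lemma composable_src (hX : X.Laws) {k : ℕ} {u v : X.cell}
    (h : X.Composable k u v) (hd : k + 1 < X.dim u) :
    X.Composable k (X.src u) (X.src v) := by
  obtain ⟨h1, h2, h3⟩ := h
  have hdv : k + 1 < X.dim v := by omega
  refine ⟨?_, ?_, ?_⟩
  · rw [hX.dim_src u (by omega), hX.dim_src v (by omega), h1]
  · rw [hX.dim_src u (by omega)]; omega
  · rw [srcAt_src hX k u (by omega), tgtAt_src hX k v hdv, h3]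

lemma composable_tgt (hX : X.Laws) {k : ℕ} {u v : X.cell}
    (h : X.Composable k u v) (hd : k + 1 < X.dim u) :
    X.Composable k (X.tgt u) (X.tgt v) := by
  obtain ⟨h1, h2, h3⟩ := h
  have hdv : k + 1 < X.dim v := by omega
  refine ⟨?_, ?_, ?_⟩
  · rw [hX.dim_tgt u (by omega), hX.dim_tgt v (by omega), h1]
  · rw [hX.dim_tgt u (by omega)]; omega
  · rw [srcAt_tgt hX k u hd, tgtAt_tgt hX k v (by omega), h3]

/-- `srcAt k (u •ₖ v) = srcAt k v` and `tgtAt k (u •ₖ v) = tgtAt k u`. -/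
lemma srcAt_comp_self (hX : X.Laws) : ∀ (j k : ℕ) (u v : X.cell),
    X.Composable k u v → X.dim u = k + 1 + j →
    X.srcAt k (X.comp k u v) = X.srcAt k v ∧
    X.tgtAt k (X.comp k u v) = X.tgtAt k u := by
  intro j
  induction j with
  | zero =>
    intro k u v h hd
    have hdc : X.dim (X.comp k u v) = X.dim u := hX.dim_comp k u v h
    have hb := hX.bd_comp_top k u v h (by omega)
    have hdv : X.dim v = k + 1 := by rw [← h.1, hd]
    have e1 : X.dim (X.comp k u v) - k = 1 := by omega
    have e2 : X.dim v - k = 1 := by omega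
    have e3 : X.dim u - k = 1 := by omega
    constructor
    · rw [OmegaCat.srcAt, OmegaCat.srcAt, e1, e2]; simp [hb.1]
    · rw [OmegaCat.tgtAt, OmegaCat.tgtAt, e1, e3]; simp [hb.2]
  | succ j ih =>
    intro k u v h hd
    have hdc : X.dim (X.comp k u v) = X.dim u := hX.dim_comp k u v h
    have hb := hX.bd_comp k u v h (by omega)
    have hcs := composable_src hX h (by omega)
    have hct := composable_tgt hX h (by omega)
    have hds : X.dim (X.src u) = k + 1 + j := by rw [hX.dim_src u (by omega)]; omega
    have hdt : X.dim (X.tgt u) = k + 1 + j := by rw [hX.dim_tgt u (by omega)]; omega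
    have hdv : X.dim v = X.dim u := h.1.symm
    constructor
    · rw [← srcAt_src hX k (X.comp k u v) (by omega), hb.1,
        (ih k _ _ hcs hds).1, srcAt_src hX k v (by omega)]
    · rw [← tgtAt_tgt hX k (X.comp k u v) (by omega), hb.2,
        (ih k _ _ hct hdt).2, tgtAt_tgt hX k u (by omega)]

lemma srcAt_comp_k (hX : X.Laws) {k : ℕ} {u v : X.cell} (h : X.Composable k u v) :
    X.srcAt k (X.comp k u v) = X.srcAt k v :=
  (srcAt_comp_self hX (X.dim u - (k+1)) k u v h (by have := h.2.1; omega)).1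

lemma tgtAt_comp_k (hX : X.Laws) {k : ℕ} {u v : X.cell} (h : X.Composable k u v) :
    X.tgtAt k (X.comp k u v) = X.tgtAt k u :=
  (srcAt_comp_self hX (X.dim u - (k+1)) k u v h (by have := h.2.1; omega)).2

lemma srcAt_comp_le (hX : X.Laws) {k m : ℕ} {u v : X.cell}
    (h : X.Composable k u v) (hm : m ≤ k) :
    X.srcAt m (X.comp k u v) = X.srcAt m v := by
  have hd : k ≤ X.dim (X.comp k u v) := by
    rw [hX.dim_comp k u v h]; exact le_of_lt h.2.1
  have hdv : X.dim v = X.dim u := h.1.symm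
  have h21 := h.2.1
  rw [← srcAt_srcAt hX m k _ hm hd, srcAt_comp_k hX h,
    srcAt_srcAt hX m k v hm (by omega)]

lemma tgtAt_comp_le (hX : X.Laws) {k m : ℕ} {u v : X.cell}
    (h : X.Composable k u v) (hm : m ≤ k) :
    X.tgtAt m (X.comp k u v) = X.tgtAt m u := by
  have hd : k ≤ X.dim (X.comp k u v) := by
    rw [hX.dim_comp k u v h]; exact le_of_lt h.2.1
  rw [← tgtAt_tgtAt hX m k _ hm hd, tgtAt_comp_k hX h,
    tgtAt_tgtAt hX m k u hm (le_of_lt h.2.1)]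

lemma composable_srcAt (hX : X.Laws) {k m : ℕ} {u v : X.cell}
    (h : X.Composable k u v) (hkm : k < m) (hm : m ≤ X.dim u) :
    X.Composable k (X.srcAt m u) (X.srcAt m v) := by
  refine ⟨?_, ?_, ?_⟩
  · rw [dim_srcAt hX m u hm, dim_srcAt hX m v (h.1 ▸ hm)]
  · rw [dim_srcAt hX m u hm]; exact hkm
  · rw [srcAt_srcAt hX k m u (le_of_lt hkm) hm,
      tgtAt_srcAt hX k m v hkm (h.1 ▸ hm)]
    exact h.2.2

lemma composable_tgtAt (hX : X.Laws) {k m : ℕ} {u v : X.cell}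
    (h : X.Composable k u v) (hkm : k < m) (hm : m ≤ X.dim u) :
    X.Composable k (X.tgtAt m u) (X.tgtAt m v) := by
  refine ⟨?_, ?_, ?_⟩
  · rw [dim_tgtAt hX m u hm, dim_tgtAt hX m v (h.1 ▸ hm)]
  · rw [dim_tgtAt hX m u hm]; exact hkm
  · rw [srcAt_tgtAt hX k m u hkm hm, tgtAt_tgtAt hX k m v (le_of_lt hkm) (h.1 ▸ hm)]
    exact h.2.2

lemma srcAt_comp_gt (hX : X.Laws) : ∀ (j k m : ℕ) (u v : X.cell),
    X.Composable k u v → k < m → X.dim u = m + j →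
    X.srcAt m (X.comp k u v) = X.comp k (X.srcAt m u) (X.srcAt m v) ∧
    X.tgtAt m (X.comp k u v) = X.comp k (X.tgtAt m u) (X.tgtAt m v) := by
  intro j
  induction j with
  | zero =>
    intro k m u v h hkm hd
    have hdc : X.dim (X.comp k u v) = X.dim u := hX.dim_comp k u v h
    rw [srcAt_dim_eq u (by omega), srcAt_dim_eq v (by rw [← h.1]; omega),
      srcAt_dim_eq _ (by omega), tgtAt_dim_eq u (by omega),
      tgtAt_dim_eq v (by rw [← h.1]; omega), tgtAt_dim_eq _ (by omega)]
    exact ⟨rfl, rfl⟩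
  | succ j ih =>
    intro k m u v h hkm hd
    have hdc : X.dim (X.comp k u v) = X.dim u := hX.dim_comp k u v h
    have hb := hX.bd_comp k u v h (by omega)
    have hcs := composable_src hX h (by omega)
    have hct := composable_tgt hX h (by omega)
    have hds : X.dim (X.src u) = m + j := by rw [hX.dim_src u (by omega)]; omega
    have hdt : X.dim (X.tgt u) = m + j := by rw [hX.dim_tgt u (by omega)]; omega
    constructor
    · rw [← srcAt_src hX m (X.comp k u v) (by omega), hb.1,
        (ih k m _ _ hcs hkm hds).1, srcAt_src hX m u (by omega),
        srcAt_src hX m v (by rw [← h.1]; omega)]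
    · rw [← tgtAt_tgt hX m (X.comp k u v) (by omega), hb.2,
        (ih k m _ _ hct hkm hdt).2, tgtAt_tgt hX m u (by omega),
        tgtAt_tgt hX m v (by rw [← h.1]; omega)]

lemma composable_compL (hX : X.Laws) {k : ℕ} {u v w : X.cell}
    (huv : X.Composable k u v) (hvw : X.Composable k v w) :
    X.Composable k (X.comp k u v) w := by
  refine ⟨?_, ?_, ?_⟩
  · rw [hX.dim_comp k u v huv, huv.1, hvw.1]
  · rw [hX.dim_comp k u v huv]; exact huv.2.1
  · rw [srcAt_comp_k hX huv]; exact hvw.2.2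

lemma composable_compR (hX : X.Laws) {k : ℕ} {u v w : X.cell}
    (huv : X.Composable k u v) (hvw : X.Composable k v w) :
    X.Composable k u (X.comp k v w) := by
  refine ⟨?_, ?_, ?_⟩
  · rw [hX.dim_comp k v w hvw, huv.1]
  · exact huv.2.1
  · rw [tgtAt_comp_k hX hvw]; exact huv.2.2

lemma srcAt_ide (hX : X.Laws) {k : ℕ} {u : X.cell} (h : k ≤ X.dim u) :
    X.srcAt k (X.ide u) = X.srcAt k u := by
  rw [OmegaCat.srcAt, OmegaCat.srcAt, hX.dim_ide u,
    show X.dim u + 1 - k = (X.dim u - k) + 1 from by omega,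
    Function.iterate_succ_apply, hX.src_ide]

lemma tgtAt_ide (hX : X.Laws) {k : ℕ} {u : X.cell} (h : k ≤ X.dim u) :
    X.tgtAt k (X.ide u) = X.tgtAt k u := by
  rw [OmegaCat.tgtAt, OmegaCat.tgtAt, hX.dim_ide u,
    show X.dim u + 1 - k = (X.dim u - k) + 1 from by omega,
    Function.iterate_succ_apply, hX.tgt_ide]

lemma composable_ide (hX : X.Laws) {k : ℕ} {u v : X.cell}
    (h : X.Composable k u v) : X.Composable k (X.ide u) (X.ide v) := by
  refine ⟨?_, ?_, ?_⟩
  · rw [hX.dim_ide, hX.dim_ide, h.1]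
  · have := h.2.1; rw [hX.dim_ide]; omega
  · have h21 := h.2.1
    have hdv : X.dim v = X.dim u := h.1.symm
    rw [srcAt_ide hX (le_of_lt h21), tgtAt_ide hX (by omega)]
    exact h.2.2

lemma dim_iter_ide (hX : X.Laws) : ∀ (j : ℕ) (u : X.cell),
    X.dim (X.ide^[j] u) = X.dim u + j := by
  intro j
  induction j with
  | zero => simp
  | succ j ih => intro u; rw [Function.iterate_succ_apply', hX.dim_ide, ih]; omega

lemma dim_idePad (hX : X.Laws) {m : ℕ} {u : X.cell} (h : X.dim u ≤ m) :
    X.dim (X.idePad m u) = m := by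
  rw [OmegaCat.idePad, dim_iter_ide hX]; omega

lemma iter_src_iter_ide (hX : X.Laws) : ∀ (j : ℕ) (u : X.cell),
    X.src^[j] (X.ide^[j] u) = u ∧ X.tgt^[j] (X.ide^[j] u) = u := by
  intro j
  induction j with
  | zero => simp
  | succ j ih =>
    intro u
    constructor
    · rw [Function.iterate_succ_apply' (f := X.ide),
        Function.iterate_succ_apply (f := X.src), hX.src_ide, (ih u).1]
    · rw [Function.iterate_succ_apply' (f := X.ide),
        Function.iterate_succ_apply (f := X.tgt), hX.tgt_ide, (ih u).2]

lemma idePad_dim_self (u : X.cell) : X.idePad (X.dim u) u = u := by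
  rw [OmegaCat.idePad, Nat.sub_self]; rfl

lemma wcomp_eq_comp (u v : X.cell) (h : X.dim u = X.dim v) :
    X.wcomp k u v = X.comp k u v := by
  rw [OmegaCat.wcomp, h, max_self, idePad_dim_self]
  conv_lhs => rw [← h, idePad_dim_self]

end CompLemmas

section IdePadLemmas
variable {X : OmegaCat}

lemma srcAt_idePad (hX : X.Laws) {k m : ℕ} {w : X.cell} (hw : X.dim w = k)
    (h : k ≤ m) : X.srcAt k (X.idePad m w) = w := by
  have hd : X.dim (X.idePad m w) = m := dim_idePad hX (by omega)
  rw [OmegaCat.srcAt, hd, OmegaCat.idePad, hw]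
  exact (iter_src_iter_ide hX (m - k) w).1

lemma tgtAt_idePad (hX : X.Laws) {k m : ℕ} {w : X.cell} (hw : X.dim w = k)
    (h : k ≤ m) : X.tgtAt k (X.idePad m w) = w := by
  have hd : X.dim (X.idePad m w) = m := dim_idePad hX (by omega)
  rw [OmegaCat.tgtAt, hd, OmegaCat.idePad, hw]
  exact (iter_src_iter_ide hX (m - k) w).2

end IdePadLemmas
section QPred

variable {X : OmegaCat}

/-- The invariant predicate on cells used to derive structural induction. -/
def QP (X : OmegaCat) (n : ℕ) (P : X.cell → Prop) (u : X.cell) : Prop :=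
  (X.dim u = n → P u) ∧ (n < X.dim u → P (X.srcAt n u) ∧ P (X.tgtAt n u))

lemma QP_low {n : ℕ} {P : X.cell → Prop} {u : X.cell} (h : X.dim u < n) :
    QP X n P u := ⟨fun h' => absurd h' (by omega), fun h' => absurd h' (by omega)⟩

lemma QP_src (hX : X.Laws) {n : ℕ} {P : X.cell → Prop} (hn : 1 ≤ n)
    {u : X.cell} (hu : QP X n P u) : QP X n P (X.src u) := by
  by_cases h0 : X.dim u = 0
  · rw [(hX.src_dim0 u h0).1]; exact hu
  · have h0' : 0 < X.dim u := Nat.pos_of_ne_zero h0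
    have hd : X.dim (X.src u) = X.dim u - 1 := hX.dim_src u h0'
    constructor
    · intro h
      have h1 : X.dim u = n + 1 := by omega
      have := hu.2 (by omega)
      have hs : X.srcAt n u = X.src u := by
        rw [OmegaCat.srcAt, show X.dim u - n = 1 from by omega]; rfl
      rw [← hs]; exact this.1
    · intro h
      have h2 : n + 1 < X.dim u := by omega
      rw [srcAt_src hX n u (by omega), tgtAt_src hX n u h2]
      exact hu.2 (by omega)

lemma QP_tgt (hX : X.Laws) {n : ℕ} {P : X.cell → Prop} (hn : 1 ≤ n)
    {u : X.cell} (hu : QP X n P u) : QP X n P (X.tgt u) := by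
  by_cases h0 : X.dim u = 0
  · rw [(hX.src_dim0 u h0).2]; exact hu
  · have h0' : 0 < X.dim u := Nat.pos_of_ne_zero h0
    have hd : X.dim (X.tgt u) = X.dim u - 1 := hX.dim_tgt u h0'
    constructor
    · intro h
      have h1 : X.dim u = n + 1 := by omega
      have := hu.2 (by omega)
      have hs : X.tgtAt n u = X.tgt u := by
        rw [OmegaCat.tgtAt, show X.dim u - n = 1 from by omega]; rfl
      rw [← hs]; exact this.2
    · intro h
      have h2 : n + 1 < X.dim u := by omega
      rw [srcAt_tgt hX n u h2, tgtAt_tgt hX n u (by omega)]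
      exact hu.2 (by omega)

lemma QP_ide (hX : X.Laws) {n : ℕ} {P : X.cell → Prop} (hn : 1 ≤ n)
    (hide : ∀ u, X.dim u = n - 1 → P (X.ide u))
    {u : X.cell} (hu : QP X n P u) : QP X n P (X.ide u) := by
  have hd : X.dim (X.ide u) = X.dim u + 1 := hX.dim_ide u
  constructor
  · intro h
    exact hide u (by omega)
  · intro h
    have hun : n ≤ X.dim u := by omega
    rw [srcAt_ide hX hun, tgtAt_ide hX hun]
    rcases Nat.eq_or_lt_of_le hun with heq | hlt
    · rw [srcAt_dim_eq u heq.symm, tgtAt_dim_eq u heq.symm]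
      exact ⟨hu.1 heq.symm, hu.1 heq.symm⟩
    · exact hu.2 hlt

lemma QP_comp (hX : X.Laws) {n : ℕ} {P : X.cell → Prop} (hn : 1 ≤ n)
    (hcomp : ∀ k u v, X.Composable k u v → X.dim u = n → P u → P v →
      P (X.comp k u v))
    {k : ℕ} {u v : X.cell} (h : X.Composable k u v)
    (hu : QP X n P u) (hv : QP X n P v) : QP X n P (X.comp k u v) := by
  have hdc : X.dim (X.comp k u v) = X.dim u := hX.dim_comp k u v h
  have hdv : X.dim v = X.dim u := h.1.symm
  constructor
  · intro hcn
    exact hcomp k u v h (by omega) (hu.1 (by omega)) (hv.1 (by omega))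
  · intro hgt
    have hgt' : n < X.dim u := by omega
    by_cases hk : k < n
    · have hgtl := srcAt_comp_gt hX (X.dim u - n) k n u v h hk (by omega)
      have hcsn := composable_srcAt hX h hk (by omega)
      have hctn := composable_tgtAt hX h hk (by omega)
      rw [hgtl.1, hgtl.2]
      constructor
      · exact hcomp k _ _ hcsn (dim_srcAt hX n u (by omega)) (hu.2 hgt').1
          (hv.2 (by omega)).1
      · exact hcomp k _ _ hctn (dim_tgtAt hX n u (by omega)) (hu.2 hgt').2
          (hv.2 (by omega)).2
    · have hnk : n ≤ k := by omega
      rw [srcAt_comp_le hX h hnk, tgtAt_comp_le hX h hnk]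
      exact ⟨(hv.2 (by omega)).1, (hu.2 hgt').2⟩

end QPred
section SubCat

variable {X : OmegaCat} {Q : X.cell → Prop}

open Classical in
/-- The sub-ω-category of cells satisfying a predicate `Q` closed under the
operations. -/
noncomputable def subCat (X : OmegaCat) (Q : X.cell → Prop)
    (hs : ∀ u, Q u → Q (X.src u)) (ht : ∀ u, Q u → Q (X.tgt u))
    (hi : ∀ u, Q u → Q (X.ide u))
    (hc : ∀ k u v, X.Composable k u v → Q u → Q v → Q (X.comp k u v)) :
    OmegaCat where
  cell := {u : X.cell // Q u}
  dim a := X.dim a.1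
  src a := ⟨X.src a.1, hs _ a.2⟩
  tgt a := ⟨X.tgt a.1, ht _ a.2⟩
  ide a := ⟨X.ide a.1, hi _ a.2⟩
  comp k a b :=
    if h : X.Composable k a.1 b.1 then ⟨X.comp k a.1 b.1, hc k _ _ h a.2 b.2⟩
    else a

variable {hs : ∀ u, Q u → Q (X.src u)} {ht : ∀ u, Q u → Q (X.tgt u)}
  {hi : ∀ u, Q u → Q (X.ide u)}
  {hc : ∀ k u v, X.Composable k u v → Q u → Q v → Q (X.comp k u v)}

lemma subCat_dim (a : (subCat X Q hs ht hi hc).cell) :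
    (subCat X Q hs ht hi hc).dim a = X.dim a.1 := rfl

lemma subCat_iter_src (j : ℕ) (a : (subCat X Q hs ht hi hc).cell) :
    ((subCat X Q hs ht hi hc).src^[j] a).1 = X.src^[j] a.1 := by
  induction j generalizing a with
  | zero => rfl
  | succ j ih =>
    rw [Function.iterate_succ_apply, Function.iterate_succ_apply]
    exact ih _

lemma subCat_iter_tgt (j : ℕ) (a : (subCat X Q hs ht hi hc).cell) :
    ((subCat X Q hs ht hi hc).tgt^[j] a).1 = X.tgt^[j] a.1 := by
  induction j generalizing a with
  | zero => rfl
  | succ j ih =>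
    rw [Function.iterate_succ_apply, Function.iterate_succ_apply]
    exact ih _

lemma subCat_iter_ide (j : ℕ) (a : (subCat X Q hs ht hi hc).cell) :
    ((subCat X Q hs ht hi hc).ide^[j] a).1 = X.ide^[j] a.1 := by
  induction j generalizing a with
  | zero => rfl
  | succ j ih =>
    rw [Function.iterate_succ_apply, Function.iterate_succ_apply]
    exact ih _

lemma subCat_srcAt (k : ℕ) (a : (subCat X Q hs ht hi hc).cell) :
    ((subCat X Q hs ht hi hc).srcAt k a).1 = X.srcAt k a.1 := by
  rw [OmegaCat.srcAt, OmegaCat.srcAt, subCat_dim, subCat_iter_src]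

lemma subCat_tgtAt (k : ℕ) (a : (subCat X Q hs ht hi hc).cell) :
    ((subCat X Q hs ht hi hc).tgtAt k a).1 = X.tgtAt k a.1 := by
  rw [OmegaCat.tgtAt, OmegaCat.tgtAt, subCat_dim, subCat_iter_tgt]

lemma subCat_idePad (m : ℕ) (a : (subCat X Q hs ht hi hc).cell) :
    ((subCat X Q hs ht hi hc).idePad m a).1 = X.idePad m a.1 := by
  rw [OmegaCat.idePad, OmegaCat.idePad, subCat_dim, subCat_iter_ide]

lemma subCat_composable {k : ℕ} {a b : (subCat X Q hs ht hi hc).cell} :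
    (subCat X Q hs ht hi hc).Composable k a b ↔ X.Composable k a.1 b.1 := by
  unfold OmegaCat.Composable
  rw [subCat_dim, subCat_dim]
  constructor
  · rintro ⟨h1, h2, h3⟩
    exact ⟨h1, h2, by rw [← subCat_srcAt (hs := hs), ← subCat_tgtAt, h3]⟩
  · rintro ⟨h1, h2, h3⟩
    refine ⟨h1, h2, Subtype.ext ?_⟩
    rw [subCat_srcAt, subCat_tgtAt]; exact h3

lemma subCat_comp_val {k : ℕ} {a b : (subCat X Q hs ht hi hc).cell}
    (h : X.Composable k a.1 b.1) :
    ((subCat X Q hs ht hi hc).comp k a b).1 = X.comp k a.1 b.1 := by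
  have : (subCat X Q hs ht hi hc).comp k a b
      = ⟨X.comp k a.1 b.1, hc k _ _ h a.2 b.2⟩ := dif_pos h
  rw [this]

lemma subCat_laws (hX : X.Laws) : (subCat X Q hs ht hi hc).Laws := by
  constructor
  · intro a h
    exact ⟨Subtype.ext (hX.src_dim0 a.1 h).1, Subtype.ext (hX.src_dim0 a.1 h).2⟩
  · intro a h; exact hX.dim_src a.1 h
  · intro a h; exact hX.dim_tgt a.1 h
  · intro a h; exact Subtype.ext (hX.src_src a.1 h)
  · intro a h; exact Subtype.ext (hX.tgt_src a.1 h)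
  · intro a; exact hX.dim_ide a.1
  · intro a; exact Subtype.ext (hX.src_ide a.1)
  · intro a; exact Subtype.ext (hX.tgt_ide a.1)
  · intro k a b h
    have hx := subCat_composable.1 h
    show X.dim ((subCat X Q hs ht hi hc).comp k a b).1 = X.dim a.1
    rw [subCat_comp_val hx]
    exact hX.dim_comp k a.1 b.1 hx
  · intro k a b h htop
    have hx := subCat_composable.1 h
    have := hX.bd_comp_top k a.1 b.1 hx htop
    constructor
    · apply Subtype.ext
      show X.src ((subCat X Q hs ht hi hc).comp k a b).1 = X.src b.1
      rw [subCat_comp_val hx]; exact this.1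
    · apply Subtype.ext
      show X.tgt ((subCat X Q hs ht hi hc).comp k a b).1 = X.tgt a.1
      rw [subCat_comp_val hx]; exact this.2
  · intro k a b h hlt
    have hx := subCat_composable.1 h
    have hsx := composable_src hX hx hlt
    have htx := composable_tgt hX hx hlt
    have := hX.bd_comp k a.1 b.1 hx hlt
    constructor
    · apply Subtype.ext
      show X.src ((subCat X Q hs ht hi hc).comp k a b).1
        = ((subCat X Q hs ht hi hc).comp k _ _).1
      rw [subCat_comp_val hx, subCat_comp_val hsx]; exact this.1
    · apply Subtype.ext
      show X.tgt ((subCat X Q hs ht hi hc).comp k a b).1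
        = ((subCat X Q hs ht hi hc).comp k _ _).1
      rw [subCat_comp_val hx, subCat_comp_val htx]; exact this.2
  · intro k a b c h1 h2
    have hx1 := subCat_composable.1 h1
    have hx2 := subCat_composable.1 h2
    apply Subtype.ext
    rw [subCat_comp_val (a := (subCat X Q hs ht hi hc).comp k a b)
        (by rw [subCat_comp_val hx1]; exact composable_compL hX hx1 hx2),
      subCat_comp_val hx1,
      subCat_comp_val (b := (subCat X Q hs ht hi hc).comp k b c)
        (by rw [subCat_comp_val hx2]; exact composable_compR hX hx1 hx2),
      subCat_comp_val hx2]
    exact hX.comp_assoc k a.1 b.1 c.1 hx1 hx2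
  · intro l k t t₁ s s₁ hlk h1 h2 h3
    have h1x := subCat_composable.1 h1
    have h2x := subCat_composable.1 h2
    have h3x : X.Composable l (X.comp k t.1 t₁.1) (X.comp k s.1 s₁.1) := by
      have := subCat_composable.1 h3
      rwa [subCat_comp_val h1x, subCat_comp_val h2x] at this
    have hdt : l < X.dim t.1 := by
      have := h3x.2.1; rwa [hX.dim_comp k _ _ h1x] at this
    have hdts : X.dim t.1 = X.dim s.1 := by
      have := h3x.1; rwa [hX.dim_comp k _ _ h1x, hX.dim_comp k _ _ h2x] at this
    have hkt : k ≤ X.dim t.1 := le_of_lt h1x.2.1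
    have hkt₁ : k ≤ X.dim t₁.1 := le_of_lt (h1x.1 ▸ h1x.2.1)
    have hks : k ≤ X.dim s.1 := le_of_lt h2x.2.1
    have hks₁ : k ≤ X.dim s₁.1 := le_of_lt (h2x.1 ▸ h2x.2.1)
    have hst : X.srcAt l t.1 = X.srcAt l t₁.1 := by
      rw [← srcAt_srcAt hX l k t.1 (le_of_lt hlk) hkt, h1x.2.2,
        srcAt_tgtAt hX l k t₁.1 hlk hkt₁]
    have hts : X.tgtAt l s₁.1 = X.tgtAt l s.1 := by
      rw [← tgtAt_tgtAt hX l k s₁.1 (le_of_lt hlk) hks₁, ← h2x.2.2,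
        tgtAt_srcAt hX l k s.1 hlk hks]
    have hmid : X.srcAt l t₁.1 = X.tgtAt l s.1 := by
      have := h3x.2.2
      rwa [srcAt_comp_le hX h1x (le_of_lt hlk),
        tgtAt_comp_le hX h2x (le_of_lt hlk)] at this
    have hls : X.Composable l t.1 s.1 := ⟨hdts, hdt, by rw [hst, hmid]⟩
    have hls₁ : X.Composable l t₁.1 s₁.1 := by
      refine ⟨by rw [← h1x.1, hdts, h2x.1], h1x.1 ▸ hdt, ?_⟩
      rw [hmid, ← hts]
    have houter : X.Composable k (X.comp l t.1 s.1) (X.comp l t₁.1 s₁.1) := by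
      refine ⟨?_, ?_, ?_⟩
      · rw [hX.dim_comp l _ _ hls, hX.dim_comp l _ _ hls₁, h1x.1]
      · rw [hX.dim_comp l _ _ hls]; exact h1x.2.1
      · rw [(srcAt_comp_gt hX (X.dim t.1 - k) l k t.1 s.1 hls hlk (by omega)).1,
          (srcAt_comp_gt hX (X.dim t₁.1 - k) l k t₁.1 s₁.1 hls₁ hlk
            (by rw [← h1x.1]; omega)).2, h1x.2.2, h2x.2.2]
    apply Subtype.ext
    rw [subCat_comp_val (a := (subCat X Q hs ht hi hc).comp k t t₁)
        (b := (subCat X Q hs ht hi hc).comp k s s₁)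
        (by rw [subCat_comp_val h1x, subCat_comp_val h2x]; exact h3x),
      subCat_comp_val h1x, subCat_comp_val h2x,
      subCat_comp_val (a := (subCat X Q hs ht hi hc).comp l t s)
        (b := (subCat X Q hs ht hi hc).comp l t₁ s₁)
        (by rw [subCat_comp_val hls, subCat_comp_val hls₁]; exact houter),
      subCat_comp_val hls, subCat_comp_val hls₁]
    exact hX.exch l k t.1 t₁.1 s.1 s₁.1 hlk h1x h2x h3x
  · intro k a hk
    have hk' : k < X.dim a.1 := hk
    have hcmp : X.Composable k (X.idePad (X.dim a.1) (X.tgtAt k a.1)) a.1 := by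
      refine ⟨?_, ?_, ?_⟩
      · rw [OmegaCat.idePad, dim_iter_ide hX, dim_tgtAt hX k a.1 (le_of_lt hk')]
        omega
      · rw [OmegaCat.idePad, dim_iter_ide hX, dim_tgtAt hX k a.1 (le_of_lt hk')]
        omega
      · rw [srcAt_idePad hX (dim_tgtAt hX k a.1 (le_of_lt hk')) (le_of_lt hk')]
    apply Subtype.ext
    have hv : ((subCat X Q hs ht hi hc).idePad ((subCat X Q hs ht hi hc).dim a)
        ((subCat X Q hs ht hi hc).tgtAt k a)).1
        = X.idePad (X.dim a.1) (X.tgtAt k a.1) := by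
      rw [subCat_idePad, subCat_tgtAt, subCat_dim]
    rw [subCat_comp_val (by rw [hv]; exact hcmp), hv]
    exact hX.comp_id_left k a.1 hk'
  · intro k a hk
    have hk' : k < X.dim a.1 := hk
    have hcmp : X.Composable k a.1 (X.idePad (X.dim a.1) (X.srcAt k a.1)) := by
      refine ⟨?_, ?_, ?_⟩
      · rw [OmegaCat.idePad, dim_iter_ide hX, dim_srcAt hX k a.1 (le_of_lt hk')]
        omega
      · exact hk'
      · rw [tgtAt_idePad hX (dim_srcAt hX k a.1 (le_of_lt hk')) (le_of_lt hk')]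
    apply Subtype.ext
    have hv : ((subCat X Q hs ht hi hc).idePad ((subCat X Q hs ht hi hc).dim a)
        ((subCat X Q hs ht hi hc).srcAt k a)).1
        = X.idePad (X.dim a.1) (X.srcAt k a.1) := by
      rw [subCat_idePad, subCat_srcAt, subCat_dim]
    rw [subCat_comp_val (by rw [hv]; exact hcmp), hv]
    exact hX.comp_id_right k a.1 hk'
  · intro k a b h
    have hx := subCat_composable.1 h
    apply Subtype.ext
    show X.ide ((subCat X Q hs ht hi hc).comp k a b).1
      = ((subCat X Q hs ht hi hc).comp k _ _).1
    rw [subCat_comp_val hx, subCat_comp_val (composable_ide hX hx)]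
    exact hX.ide_comp k a.1 b.1 hx

end SubCat
section FreeInduction

variable {X : OmegaCat} {Q : X.cell → Prop}
  {hs : ∀ u, Q u → Q (X.src u)} {ht : ∀ u, Q u → Q (X.tgt u)}
  {hi : ∀ u, Q u → Q (X.ide u)}
  {hc : ∀ k u v, X.Composable k u v → Q u → Q v → Q (X.comp k u v)}

open Classical in
/-- The comparison map `X → subCat X Q` (defined on low-dimensional cells). -/
noncomputable def subE (n : ℕ) (hlow : ∀ a, X.dim a < n → Q a)
    (dflt : (subCat X Q hs ht hi hc).cell) :
    X.cell → (subCat X Q hs ht hi hc).cell :=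
  fun a => if h : X.dim a < n then ⟨a, hlow a h⟩ else dflt

open Classical in
/-- The assignment of generators into `subCat X Q`. -/
noncomputable def subPhi (dflt : (subCat X Q hs ht hi hc).cell) :
    X.cell → (subCat X Q hs ht hi hc).cell :=
  fun x => if h : Q x then ⟨x, h⟩ else dflt

variable {n : ℕ} {hlow : ∀ a, X.dim a < n → Q a}
  {dflt : (subCat X Q hs ht hi hc).cell}

lemma subE_val {a : X.cell} (h : X.dim a < n) :
    (subE n hlow dflt a).1 = a := by
  unfold subE; erw [dif_pos h]

lemma subPhi_val {x : X.cell} (h : Q x) : (subPhi dflt x).1 = x := by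
  unfold subPhi; erw [dif_pos h]

lemma subE_extends (hX : X.Laws) (hn : 1 ≤ n) :
    ExtendsAt (subCat X Q hs ht hi hc) X (n-1) (subE n hlow dflt) := by
  refine ⟨?_, ?_, ?_, ?_, ?_, ?_⟩
  · intro a b ha hb hab
    have := congrArg Subtype.val hab
    rwa [subE_val (by omega), subE_val (by omega)] at this
  · intro u hu
    have hu' : X.dim u.1 ≤ n - 1 := hu
    refine ⟨u.1, hu', Subtype.ext ?_⟩
    exact subE_val (by omega)
  · intro a ha
    show X.dim (subE n hlow dflt a).1 = X.dim a
    rw [subE_val (by omega)]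
  · intro a h0 ha
    have hsa : X.dim (X.src a) < n := by rw [hX.dim_src a h0]; omega
    have hta : X.dim (X.tgt a) < n := by rw [hX.dim_tgt a h0]; omega
    constructor
    · apply Subtype.ext
      show X.src (subE n hlow dflt a).1 = (subE n hlow dflt (X.src a)).1
      rw [subE_val (by omega), subE_val hsa]
    · apply Subtype.ext
      show X.tgt (subE n hlow dflt a).1 = (subE n hlow dflt (X.tgt a)).1
      rw [subE_val (by omega), subE_val hta]
  · intro a ha
    apply Subtype.ext
    show X.ide (subE n hlow dflt a).1 = (subE n hlow dflt (X.ide a)).1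
    rw [subE_val (by omega), subE_val (by rw [hX.dim_ide a]; omega)]
  · intro k a b hab ha
    have hb : X.dim b < n := by rw [← hab.1]; omega
    have hcv : X.Composable k (subE n hlow dflt a).1 (subE n hlow dflt b).1 := by
      rw [subE_val (n := n) (by omega : X.dim a < n), subE_val hb]; exact hab
    apply Subtype.ext
    rw [subCat_comp_val hcv]
    rw [subE_val (n := n) (by omega : X.dim a < n), subE_val hb,
      subE_val (by rw [hX.dim_comp k a b hab]; omega)]

end FreeInduction

section InductionPrinciple

/-- Structural induction over the `n`-cells of a free extension. -/
theorem free_induction (X : OmegaCat) (hX : X.Laws) (n : ℕ) (hn : 1 ≤ n)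
    (I : Set X.cell) (hfree : FreeAtLevel X n I) (P : X.cell → Prop)
    (hgen : ∀ x ∈ I, P x)
    (hide_ : ∀ u, X.dim u = n - 1 → P (X.ide u))
    (hcomp' : ∀ k u v, X.Composable k u v → X.dim u = n → P u → P v →
      P (X.comp k u v)) :
    ∀ u, X.dim u = n → P u := by
  intro u0 hu0
  have cs : ∀ u, QP X n P u → QP X n P (X.src u) := fun u h => QP_src hX hn h
  have ct : ∀ u, QP X n P u → QP X n P (X.tgt u) := fun u h => QP_tgt hX hn h
  have ci : ∀ u, QP X n P u → QP X n P (X.ide u) :=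
    fun u h => QP_ide hX hn hide_ h
  have cc : ∀ k u v, X.Composable k u v → QP X n P u → QP X n P v →
      QP X n P (X.comp k u v) := fun k u v h hu hv => QP_comp hX hn hcomp' h hu hv
  have hQd : QP X n P (X.srcAt 0 u0) := by
    have : X.dim (X.srcAt 0 u0) = 0 := dim_srcAt hX 0 u0 (Nat.zero_le _)
    exact QP_low (by omega)
  have hlow : ∀ a, X.dim a < n → QP X n P a := fun a h => QP_low h
  -- apply freeness to the subcategory
  have hQI : ∀ x ∈ I, QP X n P x := by
    intro x hx
    have hdx := hfree.1 x hx
    exact ⟨fun _ => hgen x hx, fun h => absurd h (by omega)⟩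
  have hφ : ∀ x ∈ I,
      (subCat X (QP X n P) cs ct ci cc).dim (subPhi ⟨X.srcAt 0 u0, hQd⟩ x) = n ∧
      (subCat X (QP X n P) cs ct ci cc).src (subPhi ⟨X.srcAt 0 u0, hQd⟩ x)
        = subE n hlow ⟨X.srcAt 0 u0, hQd⟩ (X.src x) ∧
      (subCat X (QP X n P) cs ct ci cc).tgt (subPhi ⟨X.srcAt 0 u0, hQd⟩ x)
        = subE n hlow ⟨X.srcAt 0 u0, hQd⟩ (X.tgt x) := by
    intro x hx
    have hdx := hfree.1 x hx
    have h0 : 0 < X.dim x := by omega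
    refine ⟨?_, ?_, ?_⟩
    · show X.dim (subPhi _ x).1 = n
      erw [subPhi_val (hQI x hx), hdx]
    · apply Subtype.ext
      show X.src (subPhi _ x).1 = (subE n hlow _ (X.src x)).1
      erw [subPhi_val (hQI x hx), subE_val (by rw [hX.dim_src x h0]; omega)]
    · apply Subtype.ext
      show X.tgt (subPhi _ x).1 = (subE n hlow _ (X.tgt x)).1
      erw [subPhi_val (hQI x hx), subE_val (by rw [hX.dim_tgt x h0]; omega)]
  obtain ⟨G, ⟨hG1, hG2, hG3, hG4, hG5, hG6⟩, -⟩ :=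
    hfree.2 (subCat X (QP X n P) cs ct ci cc) (subCat_laws hX)
      (subE n hlow ⟨X.srcAt 0 u0, hQd⟩) (subE_extends hX hn)
      (subPhi ⟨X.srcAt 0 u0, hQd⟩) hφ
  -- apply freeness to X itself to get uniqueness
  have hextid : ExtendsAt X X (n-1) id :=
    ⟨fun a b _ _ h => h, fun u hu => ⟨u, hu, rfl⟩, fun a _ => rfl,
     fun a _ _ => ⟨rfl, rfl⟩, fun a _ => rfl, fun k a b _ _ => rfl⟩
  have hφid : ∀ x ∈ I, X.dim (id x) = n ∧ X.src (id x) = id (X.src x) ∧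
      X.tgt (id x) = id (X.tgt x) := fun x hx => ⟨hfree.1 x hx, rfl, rfl⟩
  obtain ⟨G₀, -, huniq⟩ := hfree.2 X hX id hextid id hφid
  have hidcl := huniq id
    ⟨fun u _ => rfl, fun x _ => rfl, fun u _ => rfl, fun u _ _ => ⟨rfl, rfl⟩,
     fun k u v _ _ => rfl, fun u _ => rfl⟩
  -- the composite val ∘ G also satisfies the clauses
  have key_src : ∀ (j : ℕ) (u : X.cell), j ≤ X.dim u → X.dim u ≤ n →
      X.src^[j] (G u).1 = (G (X.src^[j] u)).1 := by
    intro j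
    induction j with
    | zero => intro u _ _; rfl
    | succ j ih =>
      intro u hj hun
      have h0 : 0 < X.dim u := by omega
      rw [Function.iterate_succ_apply, Function.iterate_succ_apply]
      have hstep : X.src (G u).1 = (G (X.src u)).1 :=
        congrArg Subtype.val (hG4 u h0 hun).1
      rw [hstep]
      exact ih (X.src u) (by rw [hX.dim_src u h0]; omega)
        (by rw [hX.dim_src u h0]; omega)
  have key_tgt : ∀ (j : ℕ) (u : X.cell), j ≤ X.dim u → X.dim u ≤ n →
      X.tgt^[j] (G u).1 = (G (X.tgt^[j] u)).1 := by
    intro j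
    induction j with
    | zero => intro u _ _; rfl
    | succ j ih =>
      intro u hj hun
      have h0 : 0 < X.dim u := by omega
      rw [Function.iterate_succ_apply, Function.iterate_succ_apply]
      have hstep : X.tgt (G u).1 = (G (X.tgt u)).1 :=
        congrArg Subtype.val (hG4 u h0 hun).2
      rw [hstep]
      exact ih (X.tgt u) (by rw [hX.dim_tgt u h0]; omega)
        (by rw [hX.dim_tgt u h0]; omega)
  have hvalcl := huniq (fun u => (G u).1) ?_
  · have e1 := hvalcl u0 (le_of_eq hu0)
    have e2 := hidcl u0 (le_of_eq hu0)
    have hval : (G u0).1 = u0 := by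
      beta_reduce at e1
      rw [e1]; exact e2.symm
    have hq := (G u0).2
    rw [hval] at hq
    exact hq.1 hu0
  · refine ⟨?_, ?_, ?_, ?_, ?_, ?_⟩
    · intro u hu
      beta_reduce
      rw [hG1 u hu]
      exact subE_val (by omega)
    · intro x hx
      beta_reduce
      rw [hG2 x hx]
      exact subPhi_val (hQI x hx)
    · intro u hu
      exact hG3 u hu
    · intro u h0 hu
      exact ⟨congrArg Subtype.val (hG4 u h0 hu).1,
        congrArg Subtype.val (hG4 u h0 hu).2⟩
    · intro k u v hcv hun
      beta_reduce
      have hdu : X.dim (G u).1 = X.dim u := hG3 u hun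
      have hdv : X.dim (G v).1 = X.dim v := hG3 v (by rw [← hcv.1]; exact hun)
      have hcx : X.Composable k (G u).1 (G v).1 := by
        refine ⟨?_, ?_, ?_⟩
        · rw [hdu, hdv]; exact hcv.1
        · rw [hdu]; exact hcv.2.1
        · rw [OmegaCat.srcAt, OmegaCat.tgtAt, hdu, hdv,
            key_src (X.dim u - k) u (Nat.sub_le _ _) hun,
            key_tgt (X.dim v - k) v (Nat.sub_le _ _) (by rw [← hcv.1]; exact hun)]
          have h22 := hcv.2.2
          rw [OmegaCat.srcAt, OmegaCat.tgtAt] at h22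
          rw [h22]
      calc (G (X.comp k u v)).1
          = ((subCat X (QP X n P) cs ct ci cc).comp k (G u) (G v)).1 :=
            congrArg Subtype.val (hG5 k u v hcv hun)
        _ = X.comp k (G u).1 (G v).1 := subCat_comp_val hcx
    · intro u hu
      exact congrArg Subtype.val (hG6 u hu)

end InductionPrinciple

/-- Commutativity, associativity and identity laws for the generalized
whiskering (replacement) operations on the `n`-cells of an ω-category whose
`n`-truncation is a free extension `A[I]`. -/
theorem stmt14 (X : OmegaCat) (hX : X.Laws) (n : ℕ) (hn : 1 ≤ n)
    (I : Set X.cell) (hfree : FreeAtLevel X n I) (D : CellOcc X n I)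
    (rep : X.cell → ℕ → X.cell → X.cell) (hrep : IsWhisk X n D rep)
    -- occurrence index sets of replacements: ⟦u ▫_r v⟧ = (⟦u⟧ \ {r}) ⊔ ⟦v⟧
    (hro : ∀ u r v, WDef X n D u r v → X.dim v = n →
      Disjoint ((D.oI u).erase r) (D.oI v) ∧
      D.oI (rep u r v) = ((D.oI u).erase r) ∪ D.oI v ∧
      (∀ i ∈ (D.oI u).erase r, D.oF (rep u r v) i = D.oF u i) ∧
      (∀ i ∈ D.oI v, D.oF (rep u r v) i = D.oF v i)) :
    -- commutativity
    (∀ u r q v w, r ≠ q → WDef X n D u r v → WDef X n D u q w →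
      X.dim v = n → X.dim w = n →
      rep (rep u r v) q w = rep (rep u q w) r v) ∧
    -- associativity (w of dimension ≥ n allowed)
    (∀ u r v q w, WDef X n D u r v → X.dim v = n → q ∈ D.oI v →
      WDef X n D v q w →
      rep (rep u r v) q w = rep u r (rep v q w)) ∧
    -- identity
    (∀ u r, X.dim u = n → r ∈ D.oI u → rep u r (D.oF u r) = u) := by
  obtain ⟨hw1, hw2, hw3⟩ := hrep
  have hsrcAtn : ∀ v : X.cell, X.dim v = n → X.srcAt (n-1) v = X.src v := by
    intro v hv
    rw [OmegaCat.srcAt, hv, show n - (n-1) = 1 from by omega]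
    rfl
  have htgtAtn : ∀ v : X.cell, X.dim v = n → X.tgtAt (n-1) v = X.tgt v := by
    intro v hv
    rw [OmegaCat.tgtAt, hv, show n - (n-1) = 1 from by omega]
    rfl
  have wdefL : ∀ (k : ℕ) (u₁ u₂ : X.cell) (r : ℕ) (v : X.cell),
      X.Composable k u₁ u₂ → X.dim u₁ = n → r ∈ D.oI u₁ →
      WDef X n D (X.comp k u₁ u₂) r v → WDef X n D u₁ r v := by
    intro k u₁ u₂ r v hcab hd1 hr hwd
    have hk : k < n := by have := hcab.2.1; omega
    have hocc := D.occ_comp k u₁ u₂ hk hd1 hcab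
    exact ⟨hd1, hr, hwd.2.2.1, by rw [← hocc.2.2.1 r hr]; exact hwd.2.2.2.1,
      by rw [← hocc.2.2.1 r hr]; exact hwd.2.2.2.2⟩
  have wdefR : ∀ (k : ℕ) (u₁ u₂ : X.cell) (r : ℕ) (v : X.cell),
      X.Composable k u₁ u₂ → X.dim u₁ = n → r ∈ D.oI u₂ →
      WDef X n D (X.comp k u₁ u₂) r v → WDef X n D u₂ r v := by
    intro k u₁ u₂ r v hcab hd1 hr hwd
    have hk : k < n := by have := hcab.2.1; omega
    have hd2 : X.dim u₂ = n := by rw [← hcab.1]; exact hd1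
    have hocc := D.occ_comp k u₁ u₂ hk hd1 hcab
    exact ⟨hd2, hr, hwd.2.2.1, by rw [← hocc.2.2.2 r hr]; exact hwd.2.2.2.1,
      by rw [← hocc.2.2.2 r hr]; exact hwd.2.2.2.2⟩
  have compatL : ∀ (k : ℕ) (u₁ u₂ : X.cell) (r : ℕ) (v : X.cell),
      X.Composable k u₁ u₂ → X.dim u₁ = n → WDef X n D u₁ r v → X.dim v = n →
      X.Composable k (rep u₁ r v) u₂ := by
    intro k u₁ u₂ r v hcab hd1 hwd hv
    have hk : k < n := by have := hcab.2.1; omega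
    have h1 := hw1 u₁ r v hwd
    have hdrep : X.dim (rep u₁ r v) = n := by rw [h1.1, hv]
    refine ⟨by rw [hdrep, ← hcab.1, hd1], by rw [hdrep]; exact hk, ?_⟩
    have e1 : X.srcAt k (rep u₁ r v) = X.srcAt k u₁ := by
      rw [← srcAt_srcAt hX k (n-1) (rep u₁ r v) (by omega)
          (by rw [hdrep]; omega), h1.2.1, ← hsrcAtn u₁ hd1,
        srcAt_srcAt hX k (n-1) u₁ (by omega) (by rw [hd1]; omega)]
    rw [e1]; exact hcab.2.2
  have compatR : ∀ (k : ℕ) (u₁ u₂ : X.cell) (r : ℕ) (v : X.cell),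
      X.Composable k u₁ u₂ → X.dim u₁ = n → WDef X n D u₂ r v → X.dim v = n →
      X.Composable k u₁ (rep u₂ r v) := by
    intro k u₁ u₂ r v hcab hd1 hwd hv
    have hk : k < n := by have := hcab.2.1; omega
    have hd2 : X.dim u₂ = n := by rw [← hcab.1]; exact hd1
    have h1 := hw1 u₂ r v hwd
    have hdrep : X.dim (rep u₂ r v) = n := by rw [h1.1, hv]
    refine ⟨by rw [hdrep, hd1], by rw [hd1]; exact hk, ?_⟩
    have e1 : X.tgtAt k (rep u₂ r v) = X.tgtAt k u₂ := by
      rw [← tgtAt_tgtAt hX k (n-1) (rep u₂ r v) (by omega)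
          (by rw [hdrep]; omega), h1.2.2, ← htgtAtn u₂ hd2,
        tgtAt_tgtAt hX k (n-1) u₂ (by omega) (by rw [hd2]; omega)]
    rw [e1]; exact hcab.2.2
  have repL : ∀ (k : ℕ) (u₁ u₂ : X.cell) (r : ℕ) (v : X.cell),
      X.Composable k u₁ u₂ → X.dim u₁ = n → r ∈ D.oI u₁ →
      WDef X n D (X.comp k u₁ u₂) r v → X.dim v = n →
      rep (X.comp k u₁ u₂) r v = X.comp k (rep u₁ r v) u₂ := by
    intro k u₁ u₂ r v hcab hd1 hr hwd hv
    have hk : k < n := by have := hcab.2.1; omega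
    have h := (hw3 k u₁ u₂ r v hk hd1 hcab hwd).1 hr
    rw [h]
    apply wcomp_eq_comp
    rw [(hw1 u₁ r v (wdefL k u₁ u₂ r v hcab hd1 hr hwd)).1, hv, ← hcab.1, hd1]
  have repR : ∀ (k : ℕ) (u₁ u₂ : X.cell) (r : ℕ) (v : X.cell),
      X.Composable k u₁ u₂ → X.dim u₁ = n → r ∈ D.oI u₂ →
      WDef X n D (X.comp k u₁ u₂) r v → X.dim v = n →
      rep (X.comp k u₁ u₂) r v = X.comp k u₁ (rep u₂ r v) := by
    intro k u₁ u₂ r v hcab hd1 hr hwd hv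
    have hk : k < n := by have := hcab.2.1; omega
    have h := (hw3 k u₁ u₂ r v hk hd1 hcab hwd).2 hr
    rw [h]
    apply wcomp_eq_comp
    rw [(hw1 u₂ r v (wdefR k u₁ u₂ r v hcab hd1 hr hwd)).1, hv, hd1]
  -- identity law
  have hId : ∀ u r, X.dim u = n → r ∈ D.oI u → rep u r (D.oF u r) = u := by
    have main := free_induction X hX n hn I hfree
      (fun u => ∀ r, r ∈ D.oI u → rep u r (D.oF u r) = u) ?_ ?_ ?_
    · exact fun u r hd hr => main u hd r hr
    · intro x hx r hr
      obtain ⟨r₀, hoI, hoF⟩ := D.occ_ind x hx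
      have hrr : r = r₀ := by rw [hoI] at hr; simpa using hr
      subst hrr
      have hdx := hfree.1 x hx
      have hdoF : X.dim (D.oF x r) = n := by rw [hoF, hdx]
      have hwd : WDef X n D x r (D.oF x r) :=
        ⟨hdx, hr, by rw [hdoF], hsrcAtn _ hdoF, htgtAtn _ hdoF⟩
      rw [hw2 x r (D.oF x r) hx hoI hwd, hoF]
    · intro u hd r hr
      rw [D.occ_ide u hd] at hr
      exact absurd hr (Finset.notMem_empty r)
    · intro k u₁ u₂ hcab hd1 ih1 ih2 r hr
      have hk : k < n := by have := hcab.2.1; omega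
      have hocc := D.occ_comp k u₁ u₂ hk hd1 hcab
      have hdc : X.dim (X.comp k u₁ u₂) = n := by
        rw [hX.dim_comp k u₁ u₂ hcab]; exact hd1
      rcases Finset.mem_union.1 (hocc.2.1 ▸ hr) with h | h
      · have hoFr : D.oF (X.comp k u₁ u₂) r = D.oF u₁ r := hocc.2.2.1 r h
        have hdx : X.dim (D.oF u₁ r) = n := hfree.1 _ (D.occ_mem u₁ r h)
        have hdv : X.dim (D.oF (X.comp k u₁ u₂) r) = n := by rw [hoFr, hdx]
        have hwdc : WDef X n D (X.comp k u₁ u₂) r (D.oF (X.comp k u₁ u₂) r) :=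
          ⟨hdc, hr, by rw [hdv], hsrcAtn _ hdv, htgtAtn _ hdv⟩
        rw [repL k u₁ u₂ r _ hcab hd1 h hwdc hdv, hoFr, ih1 r h]
      · have hoFr : D.oF (X.comp k u₁ u₂) r = D.oF u₂ r := hocc.2.2.2 r h
        have hdx : X.dim (D.oF u₂ r) = n := hfree.1 _ (D.occ_mem u₂ r h)
        have hdv : X.dim (D.oF (X.comp k u₁ u₂) r) = n := by rw [hoFr, hdx]
        have hwdc : WDef X n D (X.comp k u₁ u₂) r (D.oF (X.comp k u₁ u₂) r) :=
          ⟨hdc, hr, by rw [hdv], hsrcAtn _ hdv, htgtAtn _ hdv⟩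
        rw [repR k u₁ u₂ r _ hcab hd1 h hwdc hdv, hoFr, ih2 r h]
  -- commutativity law
  have hComm : ∀ u r q v w, r ≠ q → WDef X n D u r v → WDef X n D u q w →
      X.dim v = n → X.dim w = n →
      rep (rep u r v) q w = rep (rep u q w) r v := by
    have main := free_induction X hX n hn I hfree
      (fun u => ∀ r q v w, r ≠ q → WDef X n D u r v → WDef X n D u q w →
        X.dim v = n → X.dim w = n →
        rep (rep u r v) q w = rep (rep u q w) r v) ?_ ?_ ?_
    · exact fun u r q v w hrq h1 h2 hv hw => main u h1.1 r q v w hrq h1 h2 hv hw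
    · intro x hx r q v w hrq hwr hwq hv hw
      obtain ⟨r₀, hoI, -⟩ := D.occ_ind x hx
      have h1 : r = r₀ := by have := hwr.2.1; rw [hoI] at this; simpa using this
      have h2 : q = r₀ := by have := hwq.2.1; rw [hoI] at this; simpa using this
      exact absurd (h1.trans h2.symm) hrq
    · intro u hd r q v w hrq hwr hwq hv hw
      have := hwr.2.1
      rw [D.occ_ide u hd] at this
      exact absurd this (Finset.notMem_empty r)
    · intro k u₁ u₂ hcab hd1 ih1 ih2 r q v w hrq hwr hwq hv hw
      have hk : k < n := by have := hcab.2.1; omega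
      have hd2 : X.dim u₂ = n := by rw [← hcab.1]; exact hd1
      have hocc := D.occ_comp k u₁ u₂ hk hd1 hcab
      have hdc : X.dim (X.comp k u₁ u₂) = n := by
        rw [hX.dim_comp k u₁ u₂ hcab]; exact hd1
      have mixed : ∀ r q v w, r ∈ D.oI u₁ → q ∈ D.oI u₂ →
          WDef X n D (X.comp k u₁ u₂) r v → WDef X n D (X.comp k u₁ u₂) q w →
          X.dim v = n → X.dim w = n →
          rep (rep (X.comp k u₁ u₂) r v) q w
            = rep (rep (X.comp k u₁ u₂) q w) r v := by
        intro r q v w hr1 hq2 hwr hwq hv hw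
        have hwru := wdefL k u₁ u₂ r v hcab hd1 hr1 hwr
        have hwqu := wdefR k u₁ u₂ q w hcab hd1 hq2 hwq
        have hdA : X.dim (rep u₁ r v) = n := by rw [(hw1 u₁ r v hwru).1, hv]
        have hdB : X.dim (rep u₂ q w) = n := by rw [(hw1 u₂ q w hwqu).1, hw]
        have hcA := compatL k u₁ u₂ r v hcab hd1 hwru hv
        have hcB := compatR k u₁ u₂ q w hcab hd1 hwqu hw
        have hoccA := D.occ_comp k (rep u₁ r v) u₂ hk hdA hcA
        have hoccB := D.occ_comp k u₁ (rep u₂ q w) hk hd1 hcB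
        have hdcA : X.dim (X.comp k (rep u₁ r v) u₂) = n := by
          rw [hX.dim_comp k _ _ hcA]; exact hdA
        have hdcB : X.dim (X.comp k u₁ (rep u₂ q w)) = n := by
          rw [hX.dim_comp k _ _ hcB]; exact hd1
        have hwdA : WDef X n D (X.comp k (rep u₁ r v) u₂) q w :=
          ⟨hdcA, by rw [hoccA.2.1]; exact Finset.mem_union_right _ hq2,
           hwq.2.2.1, by rw [hoccA.2.2.2 q hq2]; exact hwqu.2.2.2.1,
           by rw [hoccA.2.2.2 q hq2]; exact hwqu.2.2.2.2⟩
        have hwdB : WDef X n D (X.comp k u₁ (rep u₂ q w)) r v :=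
          ⟨hdcB, by rw [hoccB.2.1]; exact Finset.mem_union_left _ hr1,
           hwr.2.2.1, by rw [hoccB.2.2.1 r hr1]; exact hwru.2.2.2.1,
           by rw [hoccB.2.2.1 r hr1]; exact hwru.2.2.2.2⟩
        rw [repL k u₁ u₂ r v hcab hd1 hr1 hwr hv,
          repR k u₁ u₂ q w hcab hd1 hq2 hwq hw,
          repR k (rep u₁ r v) u₂ q w hcA hdA hq2 hwdA hw,
          repL k u₁ (rep u₂ q w) r v hcB hd1 hr1 hwdB hv]
      rcases Finset.mem_union.1 (hocc.2.1 ▸ hwr.2.1) with hr1 | hr2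
      · rcases Finset.mem_union.1 (hocc.2.1 ▸ hwq.2.1) with hq1 | hq2
        · -- both in u₁
          have hwru := wdefL k u₁ u₂ r v hcab hd1 hr1 hwr
          have hwqu := wdefL k u₁ u₂ q w hcab hd1 hq1 hwq
          have hroA := hro u₁ r v hwru hv
          have hroB := hro u₁ q w hwqu hw
          have hdA : X.dim (rep u₁ r v) = n := by rw [(hw1 u₁ r v hwru).1, hv]
          have hdB : X.dim (rep u₁ q w) = n := by rw [(hw1 u₁ q w hwqu).1, hw]
          have hcA := compatL k u₁ u₂ r v hcab hd1 hwru hv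
          have hcB := compatL k u₁ u₂ q w hcab hd1 hwqu hw
          have hqA : q ∈ D.oI (rep u₁ r v) := by
            rw [hroA.2.1]
            exact Finset.mem_union_left _ (Finset.mem_erase.2 ⟨Ne.symm hrq, hq1⟩)
          have hrB : r ∈ D.oI (rep u₁ q w) := by
            rw [hroB.2.1]
            exact Finset.mem_union_left _ (Finset.mem_erase.2 ⟨hrq, hr1⟩)
          have hoFA : D.oF (rep u₁ r v) q = D.oF u₁ q :=
            hroA.2.2.1 q (Finset.mem_erase.2 ⟨Ne.symm hrq, hq1⟩)
          have hoFB : D.oF (rep u₁ q w) r = D.oF u₁ r :=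
            hroB.2.2.1 r (Finset.mem_erase.2 ⟨hrq, hr1⟩)
          have hoccA := D.occ_comp k (rep u₁ r v) u₂ hk hdA hcA
          have hoccB := D.occ_comp k (rep u₁ q w) u₂ hk hdB hcB
          have hdcA : X.dim (X.comp k (rep u₁ r v) u₂) = n := by
            rw [hX.dim_comp k _ _ hcA]; exact hdA
          have hdcB : X.dim (X.comp k (rep u₁ q w) u₂) = n := by
            rw [hX.dim_comp k _ _ hcB]; exact hdB
          have hwdA : WDef X n D (X.comp k (rep u₁ r v) u₂) q w :=
            ⟨hdcA, by rw [hoccA.2.1]; exact Finset.mem_union_left _ hqA,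
             hwq.2.2.1, by rw [hoccA.2.2.1 q hqA, hoFA]; exact hwqu.2.2.2.1,
             by rw [hoccA.2.2.1 q hqA, hoFA]; exact hwqu.2.2.2.2⟩
          have hwdB : WDef X n D (X.comp k (rep u₁ q w) u₂) r v :=
            ⟨hdcB, by rw [hoccB.2.1]; exact Finset.mem_union_left _ hrB,
             hwr.2.2.1, by rw [hoccB.2.2.1 r hrB, hoFB]; exact hwru.2.2.2.1,
             by rw [hoccB.2.2.1 r hrB, hoFB]; exact hwru.2.2.2.2⟩
          rw [repL k u₁ u₂ r v hcab hd1 hr1 hwr hv,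
            repL k u₁ u₂ q w hcab hd1 hq1 hwq hw,
            repL k (rep u₁ r v) u₂ q w hcA hdA hqA hwdA hw,
            repL k (rep u₁ q w) u₂ r v hcB hdB hrB hwdB hv,
            ih1 r q v w hrq hwru hwqu hv hw]
        · exact mixed r q v w hr1 hq2 hwr hwq hv hw
      · rcases Finset.mem_union.1 (hocc.2.1 ▸ hwq.2.1) with hq1 | hq2
        · exact (mixed q r w v hq1 hr2 hwq hwr hw hv).symm
        · -- both in u₂
          have hwru := wdefR k u₁ u₂ r v hcab hd1 hr2 hwr
          have hwqu := wdefR k u₁ u₂ q w hcab hd1 hq2 hwq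
          have hroA := hro u₂ r v hwru hv
          have hroB := hro u₂ q w hwqu hw
          have hdA : X.dim (rep u₂ r v) = n := by rw [(hw1 u₂ r v hwru).1, hv]
          have hdB : X.dim (rep u₂ q w) = n := by rw [(hw1 u₂ q w hwqu).1, hw]
          have hcA := compatR k u₁ u₂ r v hcab hd1 hwru hv
          have hcB := compatR k u₁ u₂ q w hcab hd1 hwqu hw
          have hqA : q ∈ D.oI (rep u₂ r v) := by
            rw [hroA.2.1]
            exact Finset.mem_union_left _ (Finset.mem_erase.2 ⟨Ne.symm hrq, hq2⟩)
          have hrB : r ∈ D.oI (rep u₂ q w) := by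
            rw [hroB.2.1]
            exact Finset.mem_union_left _ (Finset.mem_erase.2 ⟨hrq, hr2⟩)
          have hoFA : D.oF (rep u₂ r v) q = D.oF u₂ q :=
            hroA.2.2.1 q (Finset.mem_erase.2 ⟨Ne.symm hrq, hq2⟩)
          have hoFB : D.oF (rep u₂ q w) r = D.oF u₂ r :=
            hroB.2.2.1 r (Finset.mem_erase.2 ⟨hrq, hr2⟩)
          have hoccA := D.occ_comp k u₁ (rep u₂ r v) hk hd1 hcA
          have hoccB := D.occ_comp k u₁ (rep u₂ q w) hk hd1 hcB
          have hdcA : X.dim (X.comp k u₁ (rep u₂ r v)) = n := by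
            rw [hX.dim_comp k _ _ hcA]; exact hd1
          have hdcB : X.dim (X.comp k u₁ (rep u₂ q w)) = n := by
            rw [hX.dim_comp k _ _ hcB]; exact hd1
          have hwdA : WDef X n D (X.comp k u₁ (rep u₂ r v)) q w :=
            ⟨hdcA, by rw [hoccA.2.1]; exact Finset.mem_union_right _ hqA,
             hwq.2.2.1, by rw [hoccA.2.2.2 q hqA, hoFA]; exact hwqu.2.2.2.1,
             by rw [hoccA.2.2.2 q hqA, hoFA]; exact hwqu.2.2.2.2⟩
          have hwdB : WDef X n D (X.comp k u₁ (rep u₂ q w)) r v :=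
            ⟨hdcB, by rw [hoccB.2.1]; exact Finset.mem_union_right _ hrB,
             hwr.2.2.1, by rw [hoccB.2.2.2 r hrB, hoFB]; exact hwru.2.2.2.1,
             by rw [hoccB.2.2.2 r hrB, hoFB]; exact hwru.2.2.2.2⟩
          rw [repR k u₁ u₂ r v hcab hd1 hr2 hwr hv,
            repR k u₁ u₂ q w hcab hd1 hq2 hwq hw,
            repR k u₁ (rep u₂ r v) q w hcA hd1 hqA hwdA hw,
            repR k u₁ (rep u₂ q w) r v hcB hd1 hrB hwdB hv,
            ih2 r q v w hrq hwru hwqu hv hw]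
  -- associativity law
  have hAssoc : ∀ u r v q w, WDef X n D u r v → X.dim v = n → q ∈ D.oI v →
      WDef X n D v q w → rep (rep u r v) q w = rep u r (rep v q w) := by
    have main := free_induction X hX n hn I hfree
      (fun u => ∀ r v q w, WDef X n D u r v → X.dim v = n → q ∈ D.oI v →
        WDef X n D v q w → rep (rep u r v) q w = rep u r (rep v q w)) ?_ ?_ ?_
    · exact fun u r v q w h1 h2 h3 h4 => main u h1.1 r v q w h1 h2 h3 h4
    · intro x hx r v q w hwr hv hq hwq
      obtain ⟨r₀, hoI, -⟩ := D.occ_ind x hx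
      have h1 : r = r₀ := by have := hwr.2.1; rw [hoI] at this; simpa using this
      subst h1
      have hB := hw1 v q w hwq
      have hdB : n ≤ X.dim (rep v q w) := by rw [hB.1]; exact hwq.2.2.1
      have hwd2 : WDef X n D x r (rep v q w) :=
        ⟨hwr.1, hwr.2.1, hdB,
         by rw [hB.2.1, ← hsrcAtn v hv]; exact hwr.2.2.2.1,
         by rw [hB.2.2, ← htgtAtn v hv]; exact hwr.2.2.2.2⟩
      rw [hw2 x r v hx hoI hwr, hw2 x r (rep v q w) hx hoI hwd2]
    · intro u hd r v q w hwr hv hq hwq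
      have := hwr.2.1
      rw [D.occ_ide u hd] at this
      exact absurd this (Finset.notMem_empty r)
    · intro k u₁ u₂ hcab hd1 ih1 ih2 r v q w hwr hv hq hwq
      have hk : k < n := by have := hcab.2.1; omega
      have hd2 : X.dim u₂ = n := by rw [← hcab.1]; exact hd1
      have hocc := D.occ_comp k u₁ u₂ hk hd1 hcab
      have hdc : X.dim (X.comp k u₁ u₂) = n := by
        rw [hX.dim_comp k u₁ u₂ hcab]; exact hd1
      have hB := hw1 v q w hwq
      have hdB : n ≤ X.dim (rep v q w) := by rw [hB.1]; exact hwq.2.2.1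
      have hwd2 : WDef X n D (X.comp k u₁ u₂) r (rep v q w) :=
        ⟨hdc, hwr.2.1, hdB,
         by rw [hB.2.1, ← hsrcAtn v hv]; exact hwr.2.2.2.1,
         by rw [hB.2.2, ← htgtAtn v hv]; exact hwr.2.2.2.2⟩
      rcases Finset.mem_union.1 (hocc.2.1 ▸ hwr.2.1) with hr1 | hr2
      · have hwru := wdefL k u₁ u₂ r v hcab hd1 hr1 hwr
        have hdA : X.dim (rep u₁ r v) = n := by rw [(hw1 u₁ r v hwru).1, hv]
        have hcA := compatL k u₁ u₂ r v hcab hd1 hwru hv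
        have hroA := hro u₁ r v hwru hv
        have hqA : q ∈ D.oI (rep u₁ r v) := by
          rw [hroA.2.1]; exact Finset.mem_union_right _ hq
        have hoccA := D.occ_comp k (rep u₁ r v) u₂ hk hdA hcA
        have hdcA : X.dim (X.comp k (rep u₁ r v) u₂) = n := by
          rw [hX.dim_comp k _ _ hcA]; exact hdA
        have hoFA : D.oF (rep u₁ r v) q = D.oF v q := hroA.2.2.2 q hq
        have hwdA : WDef X n D (X.comp k (rep u₁ r v) u₂) q w :=
          ⟨hdcA, by rw [hoccA.2.1]; exact Finset.mem_union_left _ hqA,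
           hwq.2.2.1, by rw [hoccA.2.2.1 q hqA, hoFA]; exact hwq.2.2.2.1,
           by rw [hoccA.2.2.1 q hqA, hoFA]; exact hwq.2.2.2.2⟩
        rw [repL k u₁ u₂ r v hcab hd1 hr1 hwr hv,
          (hw3 k (rep u₁ r v) u₂ q w hk hdA hcA hwdA).1 hqA,
          (hw3 k u₁ u₂ r (rep v q w) hk hd1 hcab hwd2).1 hr1,
          ih1 r v q w hwru hv hq hwq]
      · have hwru := wdefR k u₁ u₂ r v hcab hd1 hr2 hwr
        have hdA : X.dim (rep u₂ r v) = n := by rw [(hw1 u₂ r v hwru).1, hv]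
        have hcA := compatR k u₁ u₂ r v hcab hd1 hwru hv
        have hroA := hro u₂ r v hwru hv
        have hqA : q ∈ D.oI (rep u₂ r v) := by
          rw [hroA.2.1]; exact Finset.mem_union_right _ hq
        have hoccA := D.occ_comp k u₁ (rep u₂ r v) hk hd1 hcA
        have hdcA : X.dim (X.comp k u₁ (rep u₂ r v)) = n := by
          rw [hX.dim_comp k _ _ hcA]; exact hd1
        have hoFA : D.oF (rep u₂ r v) q = D.oF v q := hroA.2.2.2 q hq
        have hwdA : WDef X n D (X.comp k u₁ (rep u₂ r v)) q w :=
          ⟨hdcA, by rw [hoccA.2.1]; exact Finset.mem_union_right _ hqA,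
           hwq.2.2.1, by rw [hoccA.2.2.2 q hqA, hoFA]; exact hwq.2.2.2.1,
           by rw [hoccA.2.2.2 q hqA, hoFA]; exact hwq.2.2.2.2⟩
        rw [repR k u₁ u₂ r v hcab hd1 hr2 hwr hv,
          (hw3 k u₁ (rep u₂ r v) q w hk hd1 hcA hwdA).2 hqA,
          (hw3 k u₁ u₂ r (rep v q w) hk hd1 hcab hwd2).2 hr2,
          ih2 r v q w hwru hv hq hwq]
  exact ⟨hComm, hAssoc, hId⟩
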